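/- For all complex numbers s, t, u with Re s > 1, Re t > 1 and Re u > 1, one has S_3(s,t,u) = 4 ∫_0^1 ( Σ_{l=1}^∞ cos(2πla)/l^s )( Σ_{m=1}^∞ cos(2πma)/m^t )( Σ_{n=1}^∞ cos(2πna)/n^u ) da, where for each a ∈ (0,1) the three series converge. -/

import Mathlib

open Real Complex

/-- The Tornheim double zeta function, as a double series over positive integers. -/
noncomputable def tornheim (s t u : ℂ) : ℂ :=
  ∑' p : ℕ+ × ℕ+, 1 / ((p.1 : ℂ) ^ s * (p.2 : ℂ) ^ t * ((p.1 : ℂ) + (p.2 : ℂ)) ^ u)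

/-- The symmetric Tornheim double zeta function `S₁`. -/
noncomputable def S₁ (s t u : ℂ) : ℂ :=
  (1 + exp (-π * I * (s + t + u))) * tornheim s t u
    + (exp (-π * I * s) + exp (-π * I * (t + u))) * tornheim u s t
    + (exp (-π * I * t) + exp (-π * I * (u + s))) * tornheim t u s

/-- The symmetric Tornheim double zeta function `S₂`. -/
noncomputable def S₂ (s t u : ℂ) : ℂ :=
  (exp (-π * I * u) + exp (-π * I * (s + t))) * tornheim s t u
    + (exp (-π * I * t) + exp (-π * I * (u + s))) * tornheim u s t
    + (exp (-π * I * s) + exp (-π * I * (t + u))) * tornheim t u s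

/-- The symmetric Tornheim double zeta function `S₃`. -/
noncomputable def S₃ (s t u : ℂ) : ℂ :=
  tornheim s t u + tornheim u s t + tornheim t u s

/-- The symmetric Tornheim double zeta function `S₄`. -/
noncomputable def S₄ (s t u : ℂ) : ℂ :=
  -tornheim s t u + tornheim u s t + tornheim t u s

section Aux

open MeasureTheory

private lemma pnat_rpow_summable {r : ℝ} (hr : 1 < r) :
    Summable (fun l : ℕ+ => ((l : ℝ)) ^ (-r)) := by
  have h : Summable (fun n : ℕ => ((n : ℝ)) ^ (-r)) :=
    (Real.summable_nat_rpow).2 (by linarith)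
  exact h.comp_injective (fun a b hab => PNat.coe_injective hab)

private lemma norm_cos_div_cpow (s : ℂ) (a : ℝ) (l : ℕ+) :
    ‖(Real.cos (2 * π * l * a) : ℂ) / (l : ℂ) ^ s‖ ≤ ((l : ℝ)) ^ (-s.re) := by
  have hl : (0:ℝ) < (l:ℝ) := by exact_mod_cast l.pos
  have h1 : ((l : ℂ)) = (((l:ℝ)) : ℂ) := by push_cast; ring
  rw [norm_div, h1,
    norm_cpow_eq_rpow_re_of_pos hl, Complex.norm_real, Real.norm_eq_abs, Real.rpow_neg hl.le, div_eq_mul_inv]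
  calc |Real.cos (2 * π * l * a)| * ((l:ℝ) ^ s.re)⁻¹ ≤ 1 * ((l:ℝ) ^ s.re)⁻¹ := by
        gcongr; exact Real.abs_cos_le_one _
    _ = ((l:ℝ) ^ s.re)⁻¹ := one_mul _

private lemma summable_cos_div (s : ℂ) (hs : 1 < s.re) (a : ℝ) :
    Summable (fun l : ℕ+ => (Real.cos (2 * π * l * a) : ℂ) / (l : ℂ) ^ s) :=
  Summable.of_norm <| (pnat_rpow_summable hs).of_nonneg_of_le
    (fun _ => norm_nonneg _) (fun l => norm_cos_div_cpow s a l)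

/-- The triple-product term. -/
private noncomputable def Fc (s t u : ℂ) (p : ℕ+ × ℕ+ × ℕ+) (a : ℝ) : ℂ :=
  (Real.cos (2 * π * p.1 * a) : ℂ) / (p.1 : ℂ) ^ s *
    ((Real.cos (2 * π * p.2.1 * a) : ℂ) / (p.2.1 : ℂ) ^ t *
      ((Real.cos (2 * π * p.2.2 * a) : ℂ) / (p.2.2 : ℂ) ^ u))

private noncomputable def Bb (s t u : ℂ) (p : ℕ+ × ℕ+ × ℕ+) : ℝ :=
  (p.1 : ℝ) ^ (-s.re) * ((p.2.1 : ℝ) ^ (-t.re) * (p.2.2 : ℝ) ^ (-u.re))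

private lemma Fc_bound (s t u : ℂ) (p : ℕ+ × ℕ+ × ℕ+) (a : ℝ) :
    ‖Fc s t u p a‖ ≤ Bb s t u p := by
  rw [Fc, Bb, norm_mul, norm_mul]
  gcongr <;> first
    | exact norm_cos_div_cpow _ _ _
    | positivity

private lemma Bb_summable (s t u : ℂ) (hs : 1 < s.re) (ht : 1 < t.re) (hu : 1 < u.re) :
    Summable (Bb s t u) := by
  exact (pnat_rpow_summable hs).mul_of_nonneg
    ((pnat_rpow_summable ht).mul_of_nonneg (pnat_rpow_summable hu)
      (fun _ => by positivity) (fun _ => by positivity))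
    (fun _ => by positivity) (fun _ => by positivity)

set_option maxHeartbeats 1000000 in
private lemma prod_eq_tsum (s t u : ℂ) (hs : 1 < s.re) (ht : 1 < t.re) (hu : 1 < u.re) (a : ℝ) :
    (∑' l : ℕ+, (Real.cos (2 * π * l * a) : ℂ) / (l : ℂ) ^ s)
      * (∑' m : ℕ+, (Real.cos (2 * π * m * a) : ℂ) / (m : ℂ) ^ t)
      * (∑' n : ℕ+, (Real.cos (2 * π * n * a) : ℂ) / (n : ℂ) ^ u)
    = ∑' p : ℕ+ × ℕ+ × ℕ+, Fc s t u p a := by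
  have nf : ∀ (w : ℂ), 1 < w.re → Summable (fun l : ℕ+ => ‖(Real.cos (2*π*l*a) : ℂ) / (l:ℂ)^w‖) :=
    fun w hw => (pnat_rpow_summable hw).of_nonneg_of_le (fun _ => norm_nonneg _)
      (fun l => norm_cos_div_cpow w a l)
  have h23 : (∑' m : ℕ+, (Real.cos (2 * π * m * a) : ℂ) / (m : ℂ) ^ t)
      * (∑' n : ℕ+, (Real.cos (2 * π * n * a) : ℂ) / (n : ℂ) ^ u)
      = ∑' q : ℕ+ × ℕ+, (Real.cos (2*π*q.1*a) : ℂ)/(q.1:ℂ)^t * ((Real.cos (2*π*q.2*a) : ℂ)/(q.2:ℂ)^u) :=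
    tsum_mul_tsum_of_summable_norm (nf t ht) (nf u hu)
  have hq : Summable (fun q : ℕ+ × ℕ+ =>
      ‖(Real.cos (2*π*q.1*a) : ℂ)/(q.1:ℂ)^t * ((Real.cos (2*π*q.2*a) : ℂ)/(q.2:ℂ)^u)‖) := by
    simp only [norm_mul]
    exact (nf t ht).mul_of_nonneg (nf u hu) (fun _ => norm_nonneg _) (fun _ => norm_nonneg _)
  rw [mul_assoc, h23]
  exact tsum_mul_tsum_of_summable_norm (nf s hs) hq

private lemma cos_triple (x y z : ℝ) : Real.cos x * Real.cos y * Real.cos z =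
    (Real.cos (x+y+z) + Real.cos (x+y-z) + Real.cos (x-y+z) + Real.cos (x-y-z))/4 := by
  simp only [show x+y+z = (x+y)+z by ring, show x+y-z = (x+y)-z by ring,
    show x-y+z = (x-y)+z by ring, show x-y-z = (x-y)-z by ring,
    Real.cos_add, Real.cos_sub, Real.sin_add, Real.sin_sub]
  ring

private lemma intcos (k : ℤ) :
    (∫ a in (0:ℝ)..1, Real.cos (2*π*k*a)) = if k = 0 then 1 else 0 := by
  by_cases hk : k = 0
  · simp [hk]
  · have hk' : (k:ℝ) ≠ 0 := Int.cast_ne_zero.2 hk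
    have hc : (2*π*(k:ℝ)) ≠ 0 := by
      have := Real.pi_ne_zero; positivity
    rw [if_neg hk]
    have h0 := intervalIntegral.integral_comp_mul_left Real.cos hc (a := 0) (b := 1)
    simp only [mul_zero, mul_one] at h0
    have h2 : (∫ a in (0:ℝ)..1, Real.cos (2*π*k*a)) = ∫ a in (0:ℝ)..1, Real.cos ((2*π*k)*a) := by
      norm_num
    rw [h2, h0, integral_cos]
    have hsin : Real.sin (2*π*(k:ℝ)) = 0 := by
      have h3 := Real.sin_int_mul_pi (2*k)
      push_cast at h3
      rw [show (2*π*(k:ℝ)) = 2*(k:ℝ)*π by ring]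
      exact h3
    simp [hsin]

private lemma I3 (l m n : ℕ+) : (∫ a in (0:ℝ)..1,
    Real.cos (2*π*l*a) * Real.cos (2*π*m*a) * Real.cos (2*π*n*a)) =
    ((if ((l:ℤ)+m = n) then 1 else 0) + (if ((n:ℤ)+l = m) then 1 else 0)
      + (if ((m:ℤ)+n = l) then 1 else 0))/4 := by
  have key : ∀ a:ℝ, Real.cos (2*π*l*a) * Real.cos (2*π*m*a) * Real.cos (2*π*n*a) =
      (Real.cos (2*π*(((l:ℤ)+m+n : ℤ):ℝ)*a) + Real.cos (2*π*(((l:ℤ)+m-n : ℤ):ℝ)*a)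
       + Real.cos (2*π*(((l:ℤ)-m+n : ℤ):ℝ)*a) + Real.cos (2*π*(((l:ℤ)-m-n : ℤ):ℝ)*a))/4 := by
    intro a
    rw [cos_triple]
    push_cast
    ring_nf
  have ii : ∀ k : ℤ, IntervalIntegrable (fun a => Real.cos (2*π*(k:ℝ)*a)) MeasureTheory.volume 0 1 :=
    fun k => (Real.continuous_cos.comp (continuous_const.mul continuous_id)).intervalIntegrable 0 1
  simp only [key]
  rw [intervalIntegral.integral_div,
    intervalIntegral.integral_add (((ii _).add (ii _)).add (ii _)) (ii _),
    intervalIntegral.integral_add ((ii _).add (ii _)) (ii _),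
    intervalIntegral.integral_add (ii _) (ii _), intcos, intcos, intcos, intcos]
  have h1 : ¬ ((l:ℤ)+m+n = 0) := by positivity
  rw [if_neg h1]
  have e2 : ((l:ℤ)+m-n = 0) ↔ ((l:ℤ)+m = n) := by omega
  have e3 : ((l:ℤ)-m+n = 0) ↔ ((n:ℤ)+l = m) := by omega
  have e4 : ((l:ℤ)-m-n = 0) ↔ ((m:ℤ)+n = l) := by omega
  simp only [e2, e3, e4]
  ring

private lemma integral_Fc (s t u : ℂ) (p : ℕ+ × ℕ+ × ℕ+) :
    (∫ a in (0:ℝ)..1, Fc s t u p a) =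
      (((if ((p.1:ℤ)+p.2.1 = p.2.2) then 1 else 0) + (if ((p.2.2:ℤ)+p.1 = p.2.1) then 1 else 0)
        + (if ((p.2.1:ℤ)+p.2.2 = p.1) then 1 else 0) : ℂ)/4)
      * (1/((p.1:ℂ)^s * ((p.2.1:ℂ)^t * (p.2.2:ℂ)^u))) := by
  obtain ⟨l, m, n⟩ := p
  have key : ∀ a : ℝ, Fc s t u (l, m, n) a =
      ((Real.cos (2*π*l*a) * Real.cos (2*π*m*a) * Real.cos (2*π*n*a) : ℝ) : ℂ)
        * (1/((l:ℂ)^s * ((m:ℂ)^t * (n:ℂ)^u))) := by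
    intro a
    rw [Fc]
    push_cast
    ring
  simp only [key]
  rw [intervalIntegral.integral_mul_const, intervalIntegral.integral_ofReal, I3]
  push_cast
  ring_nf
  simp [apply_ite Complex.ofReal]

private lemma Fc_cont (s t u : ℂ) (p : ℕ+ × ℕ+ × ℕ+) : Continuous (Fc s t u p) := by
  unfold Fc
  apply Continuous.mul
  · exact (Complex.continuous_ofReal.comp
      (Real.continuous_cos.comp (continuous_const.mul continuous_id))).div_const _
  apply Continuous.mul <;>
    exact (Complex.continuous_ofReal.comp
      (Real.continuous_cos.comp (continuous_const.mul continuous_id))).div_const _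

private lemma swap_int (s t u : ℂ) (hs : 1 < s.re) (ht : 1 < t.re) (hu : 1 < u.re) :
    (∫ a in (0:ℝ)..1, ∑' p : ℕ+ × ℕ+ × ℕ+, Fc s t u p a)
      = ∑' p : ℕ+ × ℕ+ × ℕ+, ∫ a in (0:ℝ)..1, Fc s t u p a := by
  have hmeas : volume (Set.Ioc (0:ℝ) 1) < ⊤ := by
    rw [Real.volume_Ioc]; exact ENNReal.ofReal_lt_top
  have hint : ∀ p : ℕ+ × ℕ+ × ℕ+,
      Integrable (Fc s t u p) (volume.restrict (Set.Ioc (0:ℝ) 1)) :=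
    fun p => (Fc_cont s t u p).integrableOn_Ioc
  have hbound : ∀ p : ℕ+ × ℕ+ × ℕ+,
      (∫ a in Set.Ioc (0:ℝ) 1, ‖Fc s t u p a‖) ≤ Bb s t u p := by
    intro p
    have h := MeasureTheory.norm_setIntegral_le_of_norm_le_const (μ := volume)
      (s := Set.Ioc (0:ℝ) 1) (f := fun a => ‖Fc s t u p a‖) (C := Bb s t u p) hmeas
      (fun x _ => by simpa using Fc_bound s t u p x)
    simp only [Real.volume_real_Ioc_of_le zero_le_one, Real.volume_Ioc, sub_zero, ENNReal.toReal_ofReal zero_le_one, mul_one] at h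
    exact (le_abs_self _).trans h
  have hsum : Summable (fun p : ℕ+ × ℕ+ × ℕ+ => ∫ a in Set.Ioc (0:ℝ) 1, ‖Fc s t u p a‖) :=
    (Bb_summable s t u hs ht hu).of_nonneg_of_le
      (fun p => integral_nonneg (fun _ => norm_nonneg _)) hbound
  rw [intervalIntegral.integral_of_le zero_le_one]
  rw [← MeasureTheory.integral_tsum_of_summable_integral_norm hint hsum]
  exact tsum_congr fun p => (intervalIntegral.integral_of_le zero_le_one).symm

private lemma norm_c (s t u : ℂ) (p : ℕ+ × ℕ+ × ℕ+) :
    ‖1/((p.1:ℂ)^s * ((p.2.1:ℂ)^t * (p.2.2:ℂ)^u))‖ = Bb s t u p := by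
  obtain ⟨l, m, n⟩ := p
  have hl : (0:ℝ) < (l:ℝ) := by exact_mod_cast l.pos
  have hm : (0:ℝ) < (m:ℝ) := by exact_mod_cast m.pos
  have hn : (0:ℝ) < (n:ℝ) := by exact_mod_cast n.pos
  have el : ((l : ℂ)) = (((l:ℝ)) : ℂ) := by push_cast; ring
  have em : ((m : ℂ)) = (((m:ℝ)) : ℂ) := by push_cast; ring
  have en : ((n : ℂ)) = (((n:ℝ)) : ℂ) := by push_cast; ring
  rw [one_div, norm_inv, norm_mul, norm_mul, el, em, en,
    norm_cpow_eq_rpow_re_of_pos hl, norm_cpow_eq_rpow_re_of_pos hm,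
    norm_cpow_eq_rpow_re_of_pos hn, Bb]
  rw [Real.rpow_neg hl.le, Real.rpow_neg hm.le, Real.rpow_neg hn.le, mul_inv, mul_inv]

private lemma piece_summable (s t u : ℂ) (hs : 1 < s.re) (ht : 1 < t.re) (hu : 1 < u.re)
    (c : ℕ+ × ℕ+ × ℕ+ → Prop) [DecidablePred c] :
    Summable (fun p : ℕ+ × ℕ+ × ℕ+ => (if c p then (1:ℂ) else 0)
      * (1/((p.1:ℂ)^s * ((p.2.1:ℂ)^t * (p.2.2:ℂ)^u)))) := by
  apply Summable.of_norm
  apply (Bb_summable s t u hs ht hu).of_nonneg_of_le (fun _ => norm_nonneg _)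
  intro p
  rw [norm_mul, norm_c s t u p]
  have h1 : ‖(if c p then (1:ℂ) else 0)‖ ≤ 1 := by
    by_cases hc : c p <;> simp [hc]
  have h2 : (0:ℝ) ≤ Bb s t u p := by
    rw [Bb]; positivity
  calc ‖(if c p then (1:ℂ) else 0)‖ * Bb s t u p ≤ 1 * Bb s t u p := by gcongr
    _ = Bb s t u p := one_mul _

private lemma tsum_part1 (s t u : ℂ) :
    ∑' p : ℕ+ × ℕ+ × ℕ+, (if ((p.1:ℤ)+p.2.1 = p.2.2) then (1:ℂ) else 0)
      * (1/((p.1:ℂ)^s * ((p.2.1:ℂ)^t * (p.2.2:ℂ)^u))) = tornheim s t u := by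
  set f : ℕ+ × ℕ+ × ℕ+ → ℂ := fun p => (if ((p.1:ℤ)+p.2.1 = p.2.2) then (1:ℂ) else 0)
      * (1/((p.1:ℂ)^s * ((p.2.1:ℂ)^t * (p.2.2:ℂ)^u))) with hf
  set j : ℕ+ × ℕ+ → ℕ+ × ℕ+ × ℕ+ := fun q => (q.1, q.2, q.1 + q.2) with hj
  have hinj : Function.Injective j := by
    intro ⟨a1, a2⟩ ⟨b1, b2⟩ h
    simp only [hj, Prod.mk.injEq] at h
    simp [h.1, h.2.1]
  have hsupp : Function.support f ⊆ Set.range j := by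
    intro p hp
    obtain ⟨l, m, n⟩ := p
    simp only [hf, Function.mem_support] at hp
    by_cases hc : ((l:ℤ)+m = n)
    · have h2 : (n:ℕ) = ((l:ℕ) + (m:ℕ)) := by exact_mod_cast hc.symm
      have hn : n = l + m := by
        apply PNat.coe_injective; rw [h2]; simp [PNat.add_coe]
      exact ⟨(l,m), by simp [hj, hn]⟩
    · simp [hc] at hp
  rw [← Function.Injective.tsum_eq hinj hsupp, tornheim]
  apply tsum_congr
  intro ⟨l, m⟩
  have hc : ((l:ℤ) + m = ((l+m : ℕ+) : ℤ)) := by push_cast; ring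
  simp only [hf, hj, hc, if_pos]
  have h3 : (((l+m : ℕ+)) : ℂ) = (l:ℂ) + (m:ℂ) := by push_cast; ring
  rw [h3]
  ring

private lemma tsum_part2 (s t u : ℂ) :
    ∑' p : ℕ+ × ℕ+ × ℕ+, (if ((p.2.2:ℤ)+p.1 = p.2.1) then (1:ℂ) else 0)
      * (1/((p.1:ℂ)^s * ((p.2.1:ℂ)^t * (p.2.2:ℂ)^u))) = tornheim u s t := by
  set f : ℕ+ × ℕ+ × ℕ+ → ℂ := fun p => (if ((p.2.2:ℤ)+p.1 = p.2.1) then (1:ℂ) else 0)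
      * (1/((p.1:ℂ)^s * ((p.2.1:ℂ)^t * (p.2.2:ℂ)^u))) with hf
  set j : ℕ+ × ℕ+ → ℕ+ × ℕ+ × ℕ+ := fun q => (q.2, q.1 + q.2, q.1) with hj
  have hinj : Function.Injective j := by
    intro ⟨a1, a2⟩ ⟨b1, b2⟩ h
    simp only [hj, Prod.mk.injEq] at h
    simp [h.1, h.2.2]
  have hsupp : Function.support f ⊆ Set.range j := by
    intro p hp
    obtain ⟨l, m, n⟩ := p
    simp only [hf, Function.mem_support] at hp
    by_cases hc : ((n:ℤ)+l = m)
    · have h2 : (m:ℕ) = ((n:ℕ) + (l:ℕ)) := by exact_mod_cast hc.symm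
      have hm : m = n + l := by
        apply PNat.coe_injective; rw [h2]; simp [PNat.add_coe]
      exact ⟨(n,l), by simp [hj, hm]⟩
    · simp [hc] at hp
  rw [← Function.Injective.tsum_eq hinj hsupp, tornheim]
  apply tsum_congr
  intro ⟨n, l⟩
  have hc : ((n:ℤ) + l = ((n+l : ℕ+) : ℤ)) := by push_cast; ring
  simp only [hf, hj, hc, if_pos]
  have h3 : (((n+l : ℕ+)) : ℂ) = (n:ℂ) + (l:ℂ) := by push_cast; ring
  rw [h3]
  ring

private lemma tsum_part3 (s t u : ℂ) :
    ∑' p : ℕ+ × ℕ+ × ℕ+, (if ((p.2.1:ℤ)+p.2.2 = p.1) then (1:ℂ) else 0)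
      * (1/((p.1:ℂ)^s * ((p.2.1:ℂ)^t * (p.2.2:ℂ)^u))) = tornheim t u s := by
  set f : ℕ+ × ℕ+ × ℕ+ → ℂ := fun p => (if ((p.2.1:ℤ)+p.2.2 = p.1) then (1:ℂ) else 0)
      * (1/((p.1:ℂ)^s * ((p.2.1:ℂ)^t * (p.2.2:ℂ)^u))) with hf
  set j : ℕ+ × ℕ+ → ℕ+ × ℕ+ × ℕ+ := fun q => (q.1 + q.2, q.1, q.2) with hj
  have hinj : Function.Injective j := by
    intro ⟨a1, a2⟩ ⟨b1, b2⟩ h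
    simp only [hj, Prod.mk.injEq] at h
    simp [h.2.1, h.2.2]
  have hsupp : Function.support f ⊆ Set.range j := by
    intro p hp
    obtain ⟨l, m, n⟩ := p
    simp only [hf, Function.mem_support] at hp
    by_cases hc : ((m:ℤ)+n = l)
    · have h2 : (l:ℕ) = ((m:ℕ) + (n:ℕ)) := by exact_mod_cast hc.symm
      have hl : l = m + n := by
        apply PNat.coe_injective; rw [h2]; simp [PNat.add_coe]
      exact ⟨(m,n), by simp [hj, hl]⟩
    · simp [hc] at hp
  rw [← Function.Injective.tsum_eq hinj hsupp, tornheim]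
  apply tsum_congr
  intro ⟨m, n⟩
  have hc : ((m:ℤ) + n = ((m+n : ℕ+) : ℤ)) := by push_cast; ring
  simp only [hf, hj, hc, if_pos]
  have h3 : (((m+n : ℕ+)) : ℂ) = (m:ℂ) + (n:ℂ) := by push_cast; ring
  rw [h3]
  ring

end Aux

theorem S₃_integral_repr (s t u : ℂ) (hs : 1 < s.re) (ht : 1 < t.re) (hu : 1 < u.re) :
    (∀ a : ℝ, a ∈ Set.Ioo (0 : ℝ) 1 →
      Summable (fun l : ℕ+ => (Real.cos (2 * π * l * a) : ℂ) / (l : ℂ) ^ s) ∧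
      Summable (fun m : ℕ+ => (Real.cos (2 * π * m * a) : ℂ) / (m : ℂ) ^ t) ∧
      Summable (fun n : ℕ+ => (Real.cos (2 * π * n * a) : ℂ) / (n : ℂ) ^ u)) ∧
    S₃ s t u = 4 * ∫ a in (0 : ℝ)..1,
      (∑' l : ℕ+, (Real.cos (2 * π * l * a) : ℂ) / (l : ℂ) ^ s)
        * (∑' m : ℕ+, (Real.cos (2 * π * m * a) : ℂ) / (m : ℂ) ^ t)
        * (∑' n : ℕ+, (Real.cos (2 * π * n * a) : ℂ) / (n : ℂ) ^ u) := by
  constructor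
  · exact fun a _ => ⟨summable_cos_div s hs a, summable_cos_div t ht a, summable_cos_div u hu a⟩
  · have h1 : (∫ a in (0 : ℝ)..1,
        (∑' l : ℕ+, (Real.cos (2 * π * l * a) : ℂ) / (l : ℂ) ^ s)
          * (∑' m : ℕ+, (Real.cos (2 * π * m * a) : ℂ) / (m : ℂ) ^ t)
          * (∑' n : ℕ+, (Real.cos (2 * π * n * a) : ℂ) / (n : ℂ) ^ u))
        = ∑' p : ℕ+ × ℕ+ × ℕ+, ∫ a in (0:ℝ)..1, Fc s t u p a := by
      rw [← swap_int s t u hs ht hu]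
      apply intervalIntegral.integral_congr
      intro a _
      exact prod_eq_tsum s t u hs ht hu a
    rw [h1]
    simp only [integral_Fc]
    rw [← tsum_mul_left]
    have key : ∀ p : ℕ+ × ℕ+ × ℕ+,
        4 * ((((if ((p.1:ℤ)+p.2.1 = p.2.2) then 1 else 0)
            + (if ((p.2.2:ℤ)+p.1 = p.2.1) then 1 else 0)
            + (if ((p.2.1:ℤ)+p.2.2 = p.1) then 1 else 0) : ℂ)/4)
          * (1/((p.1:ℂ)^s * ((p.2.1:ℂ)^t * (p.2.2:ℂ)^u)))) =
        (if ((p.1:ℤ)+p.2.1 = p.2.2) then (1:ℂ) else 0)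
            * (1/((p.1:ℂ)^s * ((p.2.1:ℂ)^t * (p.2.2:ℂ)^u)))
          + (if ((p.2.2:ℤ)+p.1 = p.2.1) then (1:ℂ) else 0)
            * (1/((p.1:ℂ)^s * ((p.2.1:ℂ)^t * (p.2.2:ℂ)^u)))
          + (if ((p.2.1:ℤ)+p.2.2 = p.1) then (1:ℂ) else 0)
            * (1/((p.1:ℂ)^s * ((p.2.1:ℂ)^t * (p.2.2:ℂ)^u))) := by
      intro p; ring
    rw [tsum_congr key]
    have S1 := piece_summable s t u hs ht hu (fun p => ((p.1:ℤ)+p.2.1 = p.2.2))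
    have S2 := piece_summable s t u hs ht hu (fun p => ((p.2.2:ℤ)+p.1 = p.2.1))
    have S3 := piece_summable s t u hs ht hu (fun p => ((p.2.1:ℤ)+p.2.2 = p.1))
    rw [(S1.add S2).tsum_add S3, S1.tsum_add S2,
      tsum_part1 s t u, tsum_part2 s t u, tsum_part3 s t u, S₃]
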